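/- Let G be a finite group, S its simplex in R[G], and y ∈ S with y_e ≠ 0. Then the subgroup generated by Supp(y) equals G if and only if there exists n ∈ ℕ such that all coordinates of y^n are strictly positive. -/

import Mathlib

open Filter Topology

/-- For `y` in the simplex of `R[G]` with `y_e ≠ 0`, the subgroup generated by `Supp(y)`
is all of `G` iff some power `y^n` has all coordinates strictly positive. -/
theorem stmt6 {G : Type*} [Group G] [Fintype G]
    (y : MonoidAlgebra ℝ G) (hy1 : ∑ g : G, y.coeff g = 1) (hy0 : ∀ g, 0 ≤ y.coeff g)
    (hye : y.coeff 1 ≠ 0) :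
    Subgroup.closure (y.coeff.support : Set G) = ⊤ ↔
      ∃ n : ℕ, 0 < n ∧ ∀ g : G, 0 < (y ^ n).coeff g := by
  classical
  have hye' : 0 < y.coeff 1 := lt_of_le_of_ne (hy0 1) (Ne.symm hye)
  have h1s : (1 : G) ∈ y.coeff.support := Finsupp.mem_support_iff.mpr hye
  -- nonnegativity of all powers
  have hnn : ∀ n g, 0 ≤ (y ^ n).coeff g := by
    intro n
    induction n with
    | zero =>
      intro g
      rw [pow_zero, MonoidAlgebra.one_def, MonoidAlgebra.coeff_single, Finsupp.single_apply]
      split <;> norm_num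
    | succ n ih =>
      intro g
      rw [pow_succ', MonoidAlgebra.coeff_mul_apply_left]
      refine Finset.sum_nonneg fun a _ => mul_nonneg (hy0 a) (ih _)
  -- positivity propagates through multiplication by y
  have mulpos : ∀ (f : MonoidAlgebra ℝ G), (∀ g, 0 ≤ f.coeff g) → ∀ a ∈ y.coeff.support,
      ∀ t : G, 0 < f.coeff t → 0 < (y * f).coeff (a * t) := by
    intro f hf a ha t ht
    rw [MonoidAlgebra.coeff_mul_apply_left]
    refine Finset.sum_pos' (fun b _ => mul_nonneg (hy0 b) (hf _)) ⟨a, ha, ?_⟩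
    simpa [inv_mul_cancel_left] using
      mul_pos (lt_of_le_of_ne (hy0 a) (Ne.symm (Finsupp.mem_support_iff.mp ha))) ht
  -- positivity is monotone in the exponent
  have mono : ∀ g : G, ∀ m n : ℕ, m ≤ n → 0 < (y ^ m).coeff g → 0 < (y ^ n).coeff g := by
    intro g m n hmn
    induction n, hmn using Nat.le_induction with
    | base => exact id
    | succ n hmn ih =>
      intro h
      have := mulpos (y ^ n) (hnn n) 1 h1s g (ih h)
      rwa [one_mul, ← pow_succ'] at this
  -- products of supported lists give positive coordinates
  have listpos : ∀ l : List G, (∀ x ∈ l, x ∈ y.coeff.support) → 0 < (y ^ l.length).coeff l.prod := by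
    intro l
    induction l with
    | nil =>
      intro _
      simp [MonoidAlgebra.one_def, MonoidAlgebra.coeff_single, Finsupp.single_apply]
    | cons a l ih =>
      intro hl
      have ha : a ∈ y.coeff.support := hl a List.mem_cons_self
      have hl' : ∀ x ∈ l, x ∈ y.coeff.support := fun x hx => hl x (List.mem_cons_of_mem a hx)
      have := mulpos (y ^ l.length) (hnn _) a ha l.prod (ih hl')
      rw [← pow_succ'] at this
      simpa using this
  constructor
  · intro h
    -- the submonoid closure is a subgroup since G is finite
    have hinv : ∀ x : G, x ∈ Submonoid.closure (y.coeff.support : Set G) →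
        x⁻¹ ∈ Submonoid.closure (y.coeff.support : Set G) := by
      intro x hx
      have hx1 : x ^ orderOf x = 1 := pow_orderOf_eq_one x
      have hpos : 0 < orderOf x := orderOf_pos x
      have : x⁻¹ = x ^ (orderOf x - 1) := by
        rw [eq_comm, eq_inv_iff_mul_eq_one, ← pow_succ]
        rwa [Nat.sub_add_cancel hpos]
      rw [this]
      exact Submonoid.pow_mem _ hx _
    let H : Subgroup G :=
      { Submonoid.closure (y.coeff.support : Set G) with inv_mem' := fun {x} hx => hinv x hx }
    have hle : Subgroup.closure (y.coeff.support : Set G) ≤ H :=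
      (Subgroup.closure_le H).mpr (Submonoid.subset_closure)
    have hall : ∀ g : G, ∃ m : ℕ, 0 < (y ^ m).coeff g := by
      intro g
      have hg : g ∈ Submonoid.closure (y.coeff.support : Set G) :=
        hle (h ▸ Subgroup.mem_top g)
      obtain ⟨l, hl, rfl⟩ := Submonoid.exists_list_of_mem_closure hg
      exact ⟨l.length, listpos l hl⟩
    choose m hm using hall
    refine ⟨Finset.univ.sup m + 1, Nat.succ_pos _, fun g => ?_⟩
    exact mono g (m g) _ (le_trans (Finset.le_sup (Finset.mem_univ g)) (Nat.le_succ _)) (hm g)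
  · rintro ⟨n, hn, hpos⟩
    have claim : ∀ n : ℕ, ∀ g : G, 0 < (y ^ n).coeff g →
        g ∈ Subgroup.closure (y.coeff.support : Set G) := by
      intro n
      induction n with
      | zero =>
        intro g hg
        rw [pow_zero, MonoidAlgebra.one_def, MonoidAlgebra.coeff_single, Finsupp.single_apply] at hg
        by_cases h1 : (1 : G) = g
        · exact h1 ▸ Subgroup.one_mem _
        · simp [h1] at hg
      | succ n ih =>
        intro g hg
        rw [pow_succ', MonoidAlgebra.coeff_mul_apply_left] at hg
        have : ∑ b ∈ y.coeff.support, (0 : ℝ) < ∑ b ∈ y.coeff.support, y.coeff b * (y ^ n).coeff (b⁻¹ * g) := by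
          simpa [Finsupp.sum] using hg
        obtain ⟨b, hb, hblt⟩ := Finset.exists_lt_of_sum_lt this
        have hyb : 0 < y.coeff b := lt_of_le_of_ne (hy0 b) (Ne.symm (Finsupp.mem_support_iff.mp hb))
        have ht : 0 < (y ^ n).coeff (b⁻¹ * g) := by
          rcases (hnn n (b⁻¹ * g)).lt_or_eq with h' | h'
          · exact h'
          · rw [← h', mul_zero] at hblt; exact absurd hblt (lt_irrefl 0)
        have := Subgroup.mul_mem _ (Subgroup.subset_closure hb) (ih _ ht)
        simpa using this
    rw [eq_top_iff]
    exact fun g _ => claim n g (hpos g)
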